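/- arXiv:0905.3438 — 3 statements merged into one kernel-verified Lean document; each statement's English description precedes it below -/
import Mathlib

section
/- If C is a closed linear subspace of a real Hilbert space H and F : H → H is firmly nonexpansive, then the map T = P_C ∘ F + (Id − P_C) ∘ (Id − F) is firmly nonexpansive, where P_C is the orthogonal projector onto C. -/
open scoped RealInnerProductSpace

/-- `F` is firmly nonexpansive. -/
def FirmlyNonexpansive {H : Type*} [NormedAddCommGroup H] [InnerProductSpace ℝ H]
    (F : H → H) : Prop :=
  ∀ x y : H, ⟪F x - F y, x - y⟫ ≥ ‖F x - F y‖ ^ 2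

/-- If `C` is a closed linear subspace and `F` is firmly nonexpansive, then
`P_C ∘ F + (Id − P_C) ∘ (Id − F)` is firmly nonexpansive. -/
theorem stmt0 {H : Type*} [NormedAddCommGroup H] [InnerProductSpace ℝ H] [CompleteSpace H]
    (C : Submodule ℝ H) [CompleteSpace C] (F : H → H) (hF : FirmlyNonexpansive F) :
    FirmlyNonexpansive (fun z : H =>
      (C.orthogonalProjection (F z) : H) +
        ((z - F z) - (C.orthogonalProjection (z - F z) : H))) := by
  intro x y
  set Q := C.orthogonalProjection with hQ
  set u : H := F x - F y with hu
  set v : H := x - y with hv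
  set a : H := (Q u : H) with ha
  set b : H := (Q v : H) with hb
  set c : H := u - a with hc
  set d : H := v - b with hd
  have hmem_a : a ∈ C := (Q u).2
  have hmem_b : b ∈ C := (Q v).2
  have hmem_c : c ∈ Cᗮ := Submodule.sub_starProjection_mem_orthogonal (K := C) u
  have hmem_d : d ∈ Cᗮ := Submodule.sub_starProjection_mem_orthogonal (K := C) v
  have key : ∀ s t : H, (Q s : H) - (Q t : H) = (Q (s - t) : H) := by
    intro s t; rw [map_sub]; push_cast; ring
  have h1 : (Q (F x) : H) - (Q (F y) : H) = a := by rw [key, ← hu]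
  have h2 : (Q (x - F x) : H) - (Q (y - F y) : H) = b - a := by
    rw [key]
    have : (x - F x) - (y - F y) = v - u := by rw [hu, hv]; abel
    rw [this, ← key, ← ha, ← hb]
  have hdiff : ((Q (F x) : H) + ((x - F x) - (Q (x - F x) : H)))
      - ((Q (F y) : H) + ((y - F y) - (Q (y - F y) : H)))
      = a + (d - c) := by
    have : ((Q (F x) : H) + ((x - F x) - (Q (x - F x) : H)))
        - ((Q (F y) : H) + ((y - F y) - (Q (y - F y) : H)))
        = ((Q (F x) : H) - (Q (F y) : H)) + ((x - F x) - (y - F y))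
          - ((Q (x - F x) : H) - (Q (y - F y) : H)) := by abel
    rw [this, h1, h2]
    rw [hd, hc]
    have : (x - F x) - (y - F y) = v - u := by rw [hu, hv]; abel
    rw [this]; abel
  have o_ac : ⟪a, c⟫ = 0 := Submodule.inner_right_of_mem_orthogonal hmem_a hmem_c
  have o_ad : ⟪a, d⟫ = 0 := Submodule.inner_right_of_mem_orthogonal hmem_a hmem_d
  have o_bc : ⟪b, c⟫ = 0 := Submodule.inner_right_of_mem_orthogonal hmem_b hmem_c
  have o_bd : ⟪b, d⟫ = 0 := Submodule.inner_right_of_mem_orthogonal hmem_b hmem_d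
  have o_ca : ⟪c, a⟫ = 0 := by rw [real_inner_comm]; exact o_ac
  have o_da : ⟪d, a⟫ = 0 := by rw [real_inner_comm]; exact o_ad
  have o_cb : ⟪c, b⟫ = 0 := by rw [real_inner_comm]; exact o_bc
  have o_db : ⟪d, b⟫ = 0 := by rw [real_inner_comm]; exact o_bd
  have hFxy : ⟪u, v⟫ ≥ ‖u‖ ^ 2 := hF x y
  have hu' : u = a + c := by rw [hc]; abel
  have hv' : v = b + d := by rw [hd]; abel
  rw [← real_inner_self_eq_norm_sq] at hFxy
  simp only [ge_iff_le]
  show ‖_‖ ^ 2 ≤ ⟪_, _⟫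
  rw [hdiff, ← real_inner_self_eq_norm_sq, hv']
  rw [hu', hv'] at hFxy
  simp only [inner_add_left, inner_add_right, inner_sub_left, inner_sub_right] at hFxy ⊢
  have o_cd : ⟪d, c⟫ = ⟪c, d⟫ := real_inner_comm c d
  linarith [hFxy]
end

section
/- (Demiclosedness principle) Let N : H → H be nonexpansive on a real Hilbert space H, let (z_n) be a sequence converging weakly to z, and suppose z_n − N z_n converges strongly to 0. Then z = N z. -/
open scoped RealInnerProductSpace
open Filter Topology

/-- Demiclosedness principle: if `N` is nonexpansive, `z_n ⇀ z` weakly and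
`z_n − N z_n → 0` strongly, then `z = N z`. -/
theorem stmt5 {H : Type*} [NormedAddCommGroup H] [InnerProductSpace ℝ H] [CompleteSpace H]
    (N : H → H) (hN : ∀ x y : H, ‖N x - N y‖ ≤ ‖x - y‖)
    (z : ℕ → H) (zlim : H)
    (hweak : ∀ y : H, Tendsto (fun n => ⟪z n, y⟫) atTop (𝓝 ⟪zlim, y⟫))
    (hstrong : Tendsto (fun n => z n - N (z n)) atTop (𝓝 0)) :
    zlim = N zlim := by
  -- the sequence is bounded, by Banach–Steinhaus
  obtain ⟨C, hC⟩ : ∃ C, ∀ n, ‖(innerSL ℝ (z n) : H →L[ℝ] ℝ)‖ ≤ C := by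
    apply banach_steinhaus
    intro y
    obtain ⟨C, hC⟩ := ((hweak y).norm.bddAbove_range)
    exact ⟨C, fun n => hC ⟨n, rfl⟩⟩
  have hznorm : ∀ n, ‖z n‖ ≤ C := by
    intro n; rw [← innerSL_apply_norm (𝕜 := ℝ)]; exact hC n
  set u := zlim
  set w := N zlim
  set d : ℕ → ℝ := fun n => ‖z n - N (z n)‖
  have hd : Tendsto d atTop (𝓝 0) := by
    simpa using hstrong.norm
  set M : ℝ := C + ‖u‖
  have hM : ∀ n, ‖z n - u‖ ≤ M := fun n =>
    (norm_sub_le _ _).trans (add_le_add_left (hznorm n) _)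
  -- key inequality
  have hkey : ∀ n, ‖z n - w‖ ^ 2 - ‖z n - u‖ ^ 2 ≤ d n ^ 2 + 2 * d n * M := by
    intro n
    have h1 : ‖z n - w‖ ≤ d n + ‖z n - u‖ := by
      calc ‖z n - w‖ ≤ ‖z n - N (z n)‖ + ‖N (z n) - w‖ := norm_sub_le_norm_sub_add_norm_sub _ _ _
        _ ≤ d n + ‖z n - u‖ := add_le_add le_rfl (hN _ _)
    have h2 : ‖z n - w‖ ^ 2 ≤ (d n + ‖z n - u‖) ^ 2 :=
      pow_le_pow_left₀ (norm_nonneg _) h1 2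
    have h3 : (d n + ‖z n - u‖) ^ 2 = d n ^ 2 + 2 * d n * ‖z n - u‖ + ‖z n - u‖ ^ 2 := by ring
    have h4 : 2 * d n * ‖z n - u‖ ≤ 2 * d n * M := by
      apply mul_le_mul_of_nonneg_left (hM n)
      positivity
    nlinarith [h2, h4]
  -- the LHS tends to ‖u - w‖ ^ 2
  have hA : Tendsto (fun n => ‖z n - w‖ ^ 2 - ‖z n - u‖ ^ 2) atTop (𝓝 (‖u - w‖ ^ 2)) := by
    have heq : ∀ n, ‖z n - w‖ ^ 2 - ‖z n - u‖ ^ 2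
        = 2 * ⟪z n, u⟫ - 2 * ⟪z n, w⟫ + ‖w‖ ^ 2 - ‖u‖ ^ 2 := by
      intro n
      rw [norm_sub_sq_real, norm_sub_sq_real]; ring
    have hlim : Tendsto (fun n => 2 * ⟪z n, u⟫ - 2 * ⟪z n, w⟫ + ‖w‖ ^ 2 - ‖u‖ ^ 2)
        atTop (𝓝 (2 * ⟪u, u⟫ - 2 * ⟪u, w⟫ + ‖w‖ ^ 2 - ‖u‖ ^ 2)) := by
      exact ((((hweak u).const_mul 2).sub ((hweak w).const_mul 2)).add tendsto_const_nhds).sub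
        tendsto_const_nhds
    have : ‖u - w‖ ^ 2 = 2 * ⟪u, u⟫ - 2 * ⟪u, w⟫ + ‖w‖ ^ 2 - ‖u‖ ^ 2 := by
      rw [norm_sub_sq_real, real_inner_self_eq_norm_sq]; ring
    rw [this]
    simpa only [heq] using hlim
  -- the RHS tends to 0
  have hB : Tendsto (fun n => d n ^ 2 + 2 * d n * M) atTop (𝓝 0) := by
    have := ((hd.pow 2).add ((hd.const_mul 2).mul_const M))
    simpa using this
  have hle : ‖u - w‖ ^ 2 ≤ 0 := le_of_tendsto_of_tendsto' hA hB hkey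
  have : u - w = 0 := by
    have := sq_nonneg (‖u - w‖)
    have h0 : ‖u - w‖ ^ 2 = 0 := le_antisymm hle this
    simpa [pow_eq_zero_iff] using h0
  have := sub_eq_zero.mp this
  exact this
end

section
/- Let A be a maximal monotone operator on a real Hilbert space H and C a closed linear subspace. Suppose (x_n, u_n) is a sequence in the graph of A with (x_n, u_n) ⇀ (x, u) weakly, x_n − P_C x_n → 0 strongly, and P_C u_n → 0 strongly. Then x ∈ C, u ∈ C^⊥, u ∈ A x, and ⟨x_n, u_n⟩ → ⟨x, u⟩ = 0. -/
open scoped RealInnerProductSpace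
open Filter Topology

def MonotoneOp {H : Type*} [NormedAddCommGroup H] [InnerProductSpace ℝ H]
    (A : H → Set H) : Prop :=
  ∀ x y u v : H, u ∈ A x → v ∈ A y → 0 ≤ ⟪u - v, x - y⟫

def MaximalMonotone {H : Type*} [NormedAddCommGroup H] [InnerProductSpace ℝ H]
    (A : H → Set H) : Prop :=
  MonotoneOp A ∧ ∀ x u : H, (∀ y v : H, v ∈ A y → 0 ≤ ⟪u - v, x - y⟫) → u ∈ A x

/-- A weakly convergent sequence is norm-bounded (via Banach–Steinhaus). -/
lemma bounded_of_weak {H : Type*} [NormedAddCommGroup H] [InnerProductSpace ℝ H]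
    [CompleteSpace H] (x : ℕ → H) (xl : H)
    (hxw : ∀ y : H, Tendsto (fun n => ⟪x n, y⟫) atTop (𝓝 ⟪xl, y⟫)) :
    ∃ M : ℝ, ∀ n, ‖x n‖ ≤ M := by
  have h : ∀ y : H, ∃ Cy : ℝ, ∀ n, ‖(innerSL ℝ (x n)) y‖ ≤ Cy := by
    intro y
    have hb := Metric.isBounded_range_of_tendsto _ ((hxw y).norm)
    obtain ⟨Cy, hCy⟩ := hb.bddAbove
    exact ⟨Cy, fun n => hCy ⟨n, rfl⟩⟩
  obtain ⟨M, hM⟩ := banach_steinhaus h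
  exact ⟨M, fun n => by simpa [innerSL_apply_norm] using hM n⟩

/-- If `(x_n, u_n) ∈ gra A`, `(x_n, u_n) ⇀ (x, u)`, `x_n − P_C x_n → 0` and `P_C u_n → 0`,
then `x ∈ C`, `u ∈ C^⊥`, `u ∈ A x` and `⟪x_n, u_n⟫ → ⟪x, u⟫ = 0`. -/
theorem stmt8 {H : Type*} [NormedAddCommGroup H] [InnerProductSpace ℝ H] [CompleteSpace H]
    (A : H → Set H) (hA : MaximalMonotone A)
    (C : Submodule ℝ H) [CompleteSpace C]
    (x u : ℕ → H) (xl ul : H)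
    (hgra : ∀ n, u n ∈ A (x n))
    (hxw : ∀ y : H, Tendsto (fun n => ⟪x n, y⟫) atTop (𝓝 ⟪xl, y⟫))
    (huw : ∀ y : H, Tendsto (fun n => ⟪u n, y⟫) atTop (𝓝 ⟪ul, y⟫))
    (hxs : Tendsto (fun n => x n - (C.orthogonalProjection (x n) : H)) atTop (𝓝 0))
    (hus : Tendsto (fun n => (C.orthogonalProjection (u n) : H)) atTop (𝓝 0)) :
    xl ∈ C ∧ ul ∈ Cᗮ ∧ ul ∈ A xl ∧
      Tendsto (fun n => ⟪x n, u n⟫) atTop (𝓝 ⟪xl, ul⟫) ∧ ⟪xl, ul⟫ = 0 := by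
  -- xl ∈ C
  have hxlC : xl ∈ C := by
    rw [← Submodule.orthogonal_orthogonal C, Submodule.mem_orthogonal']
    intro y hy
    have h1 : Tendsto (fun n => ⟪x n - (C.orthogonalProjection (x n) : H), y⟫) atTop
        (𝓝 (0 : ℝ)) := by
      have := Filter.Tendsto.inner (𝕜 := ℝ) hxs (tendsto_const_nhds (x := y))
      simpa using this
    have h2 : ∀ n, ⟪x n - (C.orthogonalProjection (x n) : H), y⟫ = ⟪x n, y⟫ := by
      intro n
      rw [inner_sub_left]
      have hz : ⟪((C.orthogonalProjection (x n) : H)), y⟫ = 0 :=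
        (Submodule.mem_orthogonal _ _).1 hy _ (Submodule.coe_mem _)
      rw [hz]; ring
    have := hxw y
    simp_rw [← h2] at this
    exact tendsto_nhds_unique this h1
  -- ul ∈ Cᗮ
  have hulC : ul ∈ Cᗮ := by
    rw [Submodule.mem_orthogonal']
    intro y hy
    have h1 : Tendsto (fun n => ⟪(C.orthogonalProjection (u n) : H), y⟫) atTop
        (𝓝 (0 : ℝ)) := by
      have := Filter.Tendsto.inner (𝕜 := ℝ) hus (tendsto_const_nhds (x := y))
      simpa using this
    have h2 : ∀ n, ⟪(C.orthogonalProjection (u n) : H), y⟫ = ⟪u n, y⟫ := by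
      intro n
      have horth : ⟪u n - (C.orthogonalProjection (u n) : H), y⟫ = 0 :=
        (Submodule.mem_orthogonal' _ _).1 (Submodule.sub_starProjection_mem_orthogonal (K := C) (u n)) y hy
      rw [inner_sub_left] at horth
      linarith
    have := huw y
    simp_rw [← h2] at this
    exact tendsto_nhds_unique this h1
  -- ⟪xl, ul⟫ = 0
  have hperp : ⟪xl, ul⟫ = 0 := by
    rw [real_inner_comm]
    exact (Submodule.mem_orthogonal' _ _).1 hulC xl hxlC
  -- boundedness
  obtain ⟨Mx, hMx⟩ := bounded_of_weak x xl hxw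
  obtain ⟨Mu, hMu⟩ := bounded_of_weak u ul huw
  have hMu0 : ∀ n, (0:ℝ) ≤ Mu := fun n => le_trans (norm_nonneg _) (hMu n)
  -- key: ⟪x n, u n⟫ → 0
  have hkey : Tendsto (fun n => ⟪x n, u n⟫) atTop (𝓝 (0 : ℝ)) := by
    have hsplit : ∀ n, ⟪x n, u n⟫ =
        ⟪x n, (C.orthogonalProjection (u n) : H)⟫ +
        ⟪x n - (C.orthogonalProjection (x n) : H),
          u n - (C.orthogonalProjection (u n) : H)⟫ := by
      intro n
      have hz : ⟪((C.orthogonalProjection (x n) : H)),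
          u n - (C.orthogonalProjection (u n) : H)⟫ = 0 := by
        have := (Submodule.mem_orthogonal _ _).1
          (Submodule.sub_starProjection_mem_orthogonal (K := C) (u n))
          _ (Submodule.coe_mem (C.orthogonalProjection (x n)))
        exact this
      rw [inner_sub_left, hz, inner_sub_right]
      ring
    have h1 : Tendsto (fun n => ⟪x n, (C.orthogonalProjection (u n) : H)⟫) atTop
        (𝓝 (0:ℝ)) := by
      apply squeeze_zero_norm (a := fun n => Mx * ‖(C.orthogonalProjection (u n) : H)‖)
      · intro n
        calc ‖⟪x n, (C.orthogonalProjection (u n) : H)⟫‖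
            ≤ ‖x n‖ * ‖(C.orthogonalProjection (u n) : H)‖ := norm_inner_le_norm _ _
          _ ≤ Mx * ‖(C.orthogonalProjection (u n) : H)‖ :=
              mul_le_mul_of_nonneg_right (hMx n) (norm_nonneg _)
      · have := hus.norm
        simpa using this.const_mul Mx
    have h2 : Tendsto (fun n => ⟪x n - (C.orthogonalProjection (x n) : H),
        u n - (C.orthogonalProjection (u n) : H)⟫) atTop (𝓝 (0:ℝ)) := by
      apply squeeze_zero_norm
        (a := fun n => ‖x n - (C.orthogonalProjection (x n) : H)‖ * (2 * Mu))
      · intro n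
        calc ‖⟪x n - (C.orthogonalProjection (x n) : H),
              u n - (C.orthogonalProjection (u n) : H)⟫‖
            ≤ ‖x n - (C.orthogonalProjection (x n) : H)‖ *
              ‖u n - (C.orthogonalProjection (u n) : H)‖ := norm_inner_le_norm _ _
          _ ≤ ‖x n - (C.orthogonalProjection (x n) : H)‖ * (2 * Mu) := by
              apply mul_le_mul_of_nonneg_left _ (norm_nonneg _)
              calc ‖u n - (C.orthogonalProjection (u n) : H)‖
                  ≤ ‖u n‖ + ‖(C.orthogonalProjection (u n) : H)‖ := norm_sub_le _ _
                _ ≤ Mu + Mu := by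
                    refine add_le_add (hMu n) (le_trans ?_ (hMu n))
                    have := ContinuousLinearMap.le_of_opNorm_le (C.orthogonalProjection)
                      (Submodule.orthogonalProjectionOnto_norm_le C) (u n)
                    simpa using this
                _ = 2 * Mu := by ring
      · have := hxs.norm
        simpa using this.mul_const (2 * Mu)
    have := h1.add h2
    simp only [add_zero] at this
    exact this.congr (fun n => (hsplit n).symm)
  have hten : Tendsto (fun n => ⟪x n, u n⟫) atTop (𝓝 ⟪xl, ul⟫) := by
    rw [hperp]; exact hkey
  -- maximality
  have hmem : ul ∈ A xl := by
    apply hA.2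
    intro y v hv
    have hmono : ∀ n, (0:ℝ) ≤ ⟪u n - v, x n - y⟫ := fun n =>
      hA.1 (x n) y (u n) v (hgra n) hv
    have hexp : ∀ n, ⟪u n - v, x n - y⟫ =
        ⟪x n, u n⟫ - ⟪u n, y⟫ - ⟪x n, v⟫ + ⟪v, y⟫ := by
      intro n
      rw [inner_sub_left, inner_sub_right, inner_sub_right]
      rw [real_inner_comm (u n) (x n), real_inner_comm (v) (x n)]
      ring
    have hlim : Tendsto (fun n => ⟪u n - v, x n - y⟫) atTop
        (𝓝 (0 - ⟪ul, y⟫ - ⟪xl, v⟫ + ⟪v, y⟫)) := by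
      simp_rw [hexp]
      exact (((hkey.sub (huw y)).sub (hxw v)).add tendsto_const_nhds)
    have h0 : (0:ℝ) ≤ 0 - ⟪ul, y⟫ - ⟪xl, v⟫ + ⟪v, y⟫ :=
      le_of_tendsto_of_tendsto tendsto_const_nhds hlim
        (Eventually.of_forall hmono)
    have : ⟪ul - v, xl - y⟫ = 0 - ⟪ul, y⟫ - ⟪xl, v⟫ + ⟪v, y⟫ := by
      have e1 : ⟪ul, xl⟫ = 0 := by rw [real_inner_comm]; exact hperp
      have e2 : ⟪v, xl⟫ = ⟪xl, v⟫ := real_inner_comm _ _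
      rw [inner_sub_left, inner_sub_right, inner_sub_right, e1, e2]
      ring
    rw [this]; exact h0
  exact ⟨hxlC, hulC, hmem, hten, hperp⟩
end
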